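/- The subsequence {C_{4r−2}} of the Hardy–Littlewood constants has mean value one: (1/m) · ∑_{r=1}^{m} C_{4r−2} → 1 as m → ∞. -/

import Mathlib

open Filter Topology

/-- The twin prime constant `C₂ = ∏_{p > 2 prime} (1 - 1/(p-1)²)`. -/
noncomputable def twinPrimeConst : ℝ :=
  ∏' p : {p : ℕ // p.Prime ∧ 2 < p}, (1 - 1 / ((p : ℕ) - 1 : ℝ) ^ 2)

/-- The Hardy–Littlewood constant `C_{2r} = C₂ ∏_{p ∣ r, p > 2} (p-1)/(p-2)`. -/
noncomputable def HLconst (r : ℕ) : ℝ :=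
  twinPrimeConst *
    ∏ p ∈ r.primeFactors.filter (fun p => 2 < p), (((p : ℝ) - 1) / ((p : ℝ) - 2))

noncomputable def auxg (d : ℕ) : ℝ :=
  if Squarefree d ∧ Odd d then ∏ p ∈ d.primeFactors, (1 : ℝ) / ((p : ℝ) - 2) else 0

noncomputable def auxF (d : ℕ) : ℝ := auxg d / d

lemma three_le_of_odd_factor {p d : ℕ} (hp : p ∈ d.primeFactors) (hd : Odd d) : 3 ≤ p := by
  have hp' := Nat.prime_of_mem_primeFactors hp
  have hdvd := Nat.dvd_of_mem_primeFactors hp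
  rcases hp'.eq_two_or_odd' with rfl | hodd
  · exact absurd (hd.of_dvd_nat hdvd) (by decide)
  · have h2 := hp'.two_le
    have := Nat.odd_iff.mp hodd
    omega

lemma auxg_nonneg (d : ℕ) : 0 ≤ auxg d := by
  unfold auxg
  split_ifs with h
  · refine Finset.prod_nonneg fun p hp => ?_
    have h3 : (3:ℝ) ≤ (p:ℝ) := by exact_mod_cast three_le_of_odd_factor hp h.2
    exact div_nonneg zero_le_one (by linarith)
  · exact le_refl _

lemma auxF_nonneg (d : ℕ) : 0 ≤ auxF d := div_nonneg (auxg_nonneg d) (Nat.cast_nonneg d)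

lemma auxF_zero : auxF 0 = 0 := by simp [auxF]

lemma auxF_one : auxF 1 = 1 := by simp [auxF, auxg, squarefree_one]

lemma auxg_eq_zero_of_even {d : ℕ} (hd : ¬ Odd d) : auxg d = 0 := by
  simp [auxg, hd]

lemma prod_eq_sum_divisors {n : ℕ} (hn : n ≠ 0) (hodd : Odd n) :
    ∏ p ∈ n.primeFactors.filter (fun p => 2 < p), (((p:ℝ) - 1)/((p:ℝ)-2))
      = ∑ d ∈ n.divisors, auxg d := by
  have hfilter : n.primeFactors.filter (fun p => 2 < p) = n.primeFactors := by
    apply Finset.filter_true_of_mem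
    intro p hp; have := three_le_of_odd_factor hp hodd; omega
  rw [hfilter]
  have h1 : ∑ d ∈ n.divisors, auxg d
      = ∑ d ∈ n.divisors.filter Squarefree, ∏ p ∈ d.primeFactors, (1:ℝ)/((p:ℝ)-2) := by
    rw [Finset.sum_filter]
    refine Finset.sum_congr rfl fun d hd => ?_
    have hdodd : Odd d := hodd.of_dvd_nat (Nat.mem_divisors.mp hd).1
    by_cases hsq : Squarefree d <;> simp [auxg, hdodd, hsq]
  rw [h1, Nat.sum_divisors_filter_squarefree hn]
  have h2 : (UniqueFactorizationMonoid.normalizedFactors n).toFinset = n.primeFactors := by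
    rw [Nat.factors_eq]; simp
  rw [h2]
  have h3 : ∀ t ∈ n.primeFactors.powerset,
      ∏ p ∈ t.val.prod.primeFactors, (1:ℝ)/((p:ℝ)-2) = ∏ p ∈ t, (1:ℝ)/((p:ℝ)-2) := by
    intro t ht
    rw [Finset.mem_powerset] at ht
    have : t.val.prod = ∏ p ∈ t, p := by rw [Finset.prod_val]; rfl
    rw [this, Nat.primeFactors_prod (fun p hp => Nat.prime_of_mem_primeFactors (ht hp))]
  rw [Finset.sum_congr rfl h3]
  have h4 := Finset.prod_add (fun p : ℕ => (1:ℝ)/((p:ℝ)-2)) (fun _ => (1:ℝ)) n.primeFactors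
  simp only [Finset.prod_const_one, mul_one] at h4
  rw [← h4]
  refine Finset.prod_congr rfl fun p hp => ?_
  have h3p : (3:ℝ) ≤ (p:ℝ) := by exact_mod_cast three_le_of_odd_factor hp hodd
  have : (p:ℝ) - 2 ≠ 0 := by linarith
  field_simp
  ring

lemma count_bound {d m : ℕ} (hd : Odd d) :
    |((((Finset.Icc 1 m).filter (fun r => d ∣ 2*r-1)).card : ℝ) - m / d)| ≤ 1 := by
  have hd1 : 1 ≤ d := hd.pos
  set v := (d+1)/2 with hv
  have hdm : d % 2 = 1 := Nat.odd_iff.mp hd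
  have h2v : 2 * v = d + 1 := by omega
  have h2v' : (2:ℤ) * v = (d:ℤ) + 1 := by exact_mod_cast h2v
  have hiff : ∀ r ∈ Finset.Icc 1 m, (d ∣ 2*r-1 ↔ r ≡ v [MOD d]) := by
    intro r hr
    have hr1 : 1 ≤ r := (Finset.mem_Icc.mp hr).1
    have hco : IsCoprime (d:ℤ) 2 := by
      have : Nat.Coprime d 2 := Nat.coprime_two_right.mpr hd
      exact Int.isCoprime_iff_gcd_eq_one.mpr (by simpa [Int.gcd] using this)
    rw [Nat.modEq_iff_dvd]
    constructor
    · intro h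
      have h' : (d:ℤ) ∣ 2*(r:ℤ)-1 := by
        have := Int.natCast_dvd_natCast.mpr h
        push_cast [Nat.cast_sub (by omega : 1 ≤ 2*r)] at this
        convert this using 1
      obtain ⟨k, hk⟩ := h'
      have h2 : 2*((v:ℤ)-r) = d*(1-k) := by linear_combination h2v' - hk
      exact hco.dvd_of_dvd_mul_left ⟨1-k, by linarith [h2]⟩
    · intro h
      obtain ⟨k, hk⟩ := h
      have h2 : 2*(r:ℤ)-1 = d * (-2*k + 1) := by linear_combination (-2:ℤ)*hk + h2v'
      have : (d:ℤ) ∣ ((2*r-1:ℕ):ℤ) := by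
        push_cast [Nat.cast_sub (by omega : 1 ≤ 2*r)]
        exact ⟨-2*k+1, h2⟩
      exact_mod_cast this
  rw [Finset.filter_congr hiff]
  have hIcc : Finset.Icc 1 m = Finset.Ioc 0 m := rfl
  rw [hIcc]
  have hcard := Nat.Ioc_filter_modEq_card 0 m (show 0 < d by omega) v
  set c := (Finset.filter (fun x => x ≡ v [MOD d]) (Finset.Ioc 0 m)).card with hc
  have hceq : (c:ℤ) = max (⌊((m:ℚ) - v)/d⌋ - ⌊((0:ℚ) - v)/d⌋) 0 := by
    simpa using hcard
  have hdq : (0:ℚ) < d := by exact_mod_cast hd1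
  have h1 := Int.floor_le (((m:ℚ) - v)/d)
  have h2 := Int.lt_floor_add_one (((m:ℚ) - v)/d)
  have h3 := Int.floor_le (((0:ℚ) - v)/d)
  have h4 := Int.lt_floor_add_one (((0:ℚ) - v)/d)
  have hdiff : ((m:ℚ) - v)/d - ((0:ℚ) - v)/d = (m:ℚ)/d := by
    rw [div_sub_div_same]; congr 1; ring
  have hABlb : (m:ℚ)/d - 1 < (⌊((m:ℚ) - v)/d⌋ : ℚ) - (⌊((0:ℚ) - v)/d⌋ : ℚ) := by
    linarith
  have hABub : (⌊((m:ℚ) - v)/d⌋ : ℚ) - (⌊((0:ℚ) - v)/d⌋ : ℚ) < (m:ℚ)/d + 1 := by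
    linarith
  have hq : |((c:ℚ)) - (m:ℚ)/(d:ℚ)| ≤ 1 := by
    rw [abs_le]
    have hq0 : (0:ℚ) ≤ (m:ℚ)/d := by positivity
    rcases le_total (⌊((m:ℚ) - v)/d⌋ - ⌊((0:ℚ) - v)/d⌋) 0 with hle | hle
    · have hc0 : (c:ℤ) = 0 := by omega
      have hc0' : (c:ℚ) = 0 := by exact_mod_cast hc0
      have hle' : ((⌊((m:ℚ) - v)/d⌋ : ℚ) - (⌊((0:ℚ) - v)/d⌋ : ℚ)) ≤ 0 := by
        exact_mod_cast sub_nonpos.mpr (by omega : (⌊((m:ℚ) - v)/d⌋ : ℤ) ≤ ⌊((0:ℚ) - v)/d⌋)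
      constructor
      · rw [hc0']; linarith
      · rw [hc0']; linarith
    · have hcAB : (c:ℤ) = ⌊((m:ℚ) - v)/d⌋ - ⌊((0:ℚ) - v)/d⌋ := by omega
      have hcAB' : (c:ℚ) = (⌊((m:ℚ) - v)/d⌋ : ℚ) - (⌊((0:ℚ) - v)/d⌋ : ℚ) := by
        exact_mod_cast hcAB
      exact ⟨by rw [hcAB']; linarith, by rw [hcAB']; linarith⟩
  calc |((c:ℝ)) - (m:ℝ)/(d:ℝ)| = ((|((c:ℚ)) - (m:ℚ)/(d:ℚ)| : ℚ) : ℝ) := by push_cast; ring_nf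
    _ ≤ 1 := by exact_mod_cast hq

noncomputable def auxw (p : ℕ) : ℝ := 1 / ((p : ℝ) * ((p : ℝ) - 2))

lemma auxw_nonneg {p : ℕ} (hp : 2 ≤ p) : 0 ≤ auxw p := by
  unfold auxw
  have : (2:ℝ) ≤ (p:ℝ) := by exact_mod_cast hp
  apply div_nonneg zero_le_one
  nlinarith

lemma auxF_eq_prod {n : ℕ} (hsq : Squarefree n) (hodd : Odd n) :
    auxF n = ∏ p ∈ n.primeFactors, auxw p := by
  unfold auxF auxg auxw
  rw [if_pos ⟨hsq, hodd⟩]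
  conv_lhs => rw [show (n:ℝ) = ((∏ p ∈ n.primeFactors, p : ℕ) : ℝ) by
    rw [Nat.prod_primeFactors_of_squarefree hsq]]
  push_cast
  rw [← Finset.prod_div_distrib]
  refine Finset.prod_congr rfl fun p hp => ?_
  rw [div_div]
  ring_nf

lemma sum_range_auxF_le (N : ℕ) :
    ∑ n ∈ Finset.range N, auxF n ≤ Real.exp (3 * ∑' k : ℕ, 1/(k:ℝ)^2) := by
  classical
  have hw : ∀ p ∈ N.primesBelow, 0 ≤ auxw p := fun p hp =>
    auxw_nonneg (Nat.prime_of_mem_primesBelow hp).two_le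
  -- restrict to squarefree odd
  have h0 : ∑ n ∈ Finset.range N, auxF n
      = ∑ n ∈ (Finset.range N).filter (fun n => Squarefree n ∧ Odd n), auxF n := by
    refine (Finset.sum_filter_of_ne fun n _ hne => ?_).symm
    by_contra h
    exact hne (by simp [auxF, auxg, h])
  rw [h0]
  -- rewrite as products and inject into powerset
  have h1 : ∑ n ∈ (Finset.range N).filter (fun n => Squarefree n ∧ Odd n), auxF n
      = ∑ t ∈ ((Finset.range N).filter (fun n => Squarefree n ∧ Odd n)).image Nat.primeFactors,
          ∏ p ∈ t, auxw p := by
    rw [Finset.sum_image ?hinj]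
    · exact Finset.sum_congr rfl fun n hn => by
        have := Finset.mem_filter.mp hn
        exact auxF_eq_prod this.2.1 this.2.2
    · intro x hx y hy hxy
      have hx' := (Finset.mem_filter.mp hx).2.1
      have hy' := (Finset.mem_filter.mp hy).2.1
      rw [← Nat.prod_primeFactors_of_squarefree hx', ← Nat.prod_primeFactors_of_squarefree hy',
        hxy]
  rw [h1]
  have hsub : ((Finset.range N).filter (fun n => Squarefree n ∧ Odd n)).image Nat.primeFactors
      ⊆ N.primesBelow.powerset := by
    intro t ht
    obtain ⟨n, hn, rfl⟩ := Finset.mem_image.mp ht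
    have hnN := Finset.mem_range.mp (Finset.mem_filter.mp hn).1
    rw [Finset.mem_powerset]
    intro p hp
    have hp' := Nat.prime_of_mem_primeFactors hp
    have hn0 : n ≠ 0 := (Nat.mem_primeFactors.mp hp).2.2
    have hpn := Nat.le_of_dvd (Nat.pos_of_ne_zero hn0) (Nat.dvd_of_mem_primeFactors hp)
    exact Nat.mem_primesBelow.mpr ⟨by omega, hp'⟩
  have h2 : ∑ t ∈ ((Finset.range N).filter (fun n => Squarefree n ∧ Odd n)).image Nat.primeFactors,
        ∏ p ∈ t, auxw p ≤ ∑ t ∈ N.primesBelow.powerset, ∏ p ∈ t, auxw p := by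
    refine Finset.sum_le_sum_of_subset_of_nonneg hsub fun t ht _ => ?_
    exact Finset.prod_nonneg fun p hp => hw p (Finset.mem_powerset.mp ht hp)
  have h3 : ∑ t ∈ N.primesBelow.powerset, ∏ p ∈ t, auxw p
      = ∏ p ∈ N.primesBelow, (auxw p + 1) := by
    rw [Finset.prod_add]
    simp
  have h4 : ∏ p ∈ N.primesBelow, (auxw p + 1) ≤ Real.exp (∑ p ∈ N.primesBelow, auxw p) := by
    rw [Real.exp_sum]
    refine Finset.prod_le_prod (fun p hp => by linarith [hw p hp]) fun p hp =>
      Real.add_one_le_exp _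
  have h5 : ∑ p ∈ N.primesBelow, auxw p ≤ 3 * ∑' k : ℕ, 1/(k:ℝ)^2 := by
    have hsummable : Summable (fun k : ℕ => 3 * (1/(k:ℝ)^2)) :=
      (Real.summable_one_div_nat_pow.mpr one_lt_two).mul_left 3
    calc ∑ p ∈ N.primesBelow, auxw p ≤ ∑ p ∈ N.primesBelow, 3 * (1/(p:ℝ)^2) := by
          refine Finset.sum_le_sum fun p hp => ?_
          have hp' := Nat.prime_of_mem_primesBelow hp
          rcases hp'.eq_two_or_odd' with rfl | hodd
          · norm_num [auxw]
          · have h3p : 3 ≤ p := by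
              have := hp'.two_le; have := Nat.odd_iff.mp hodd; omega
            have h3p' : (3:ℝ) ≤ (p:ℝ) := by exact_mod_cast h3p
            unfold auxw
            rw [div_le_iff₀ (by nlinarith), mul_comm (3:ℝ), mul_assoc, one_div,
              inv_mul_eq_div, ← ge_iff_le]
            rw [ge_iff_le, le_div_iff₀ (by nlinarith)]
            nlinarith
      _ ≤ ∑' k : ℕ, 3 * (1/(k:ℝ)^2) := by
          refine Summable.sum_le_tsum _ (fun k _ => by positivity) hsummable
      _ = 3 * ∑' k : ℕ, 1/(k:ℝ)^2 := by rw [tsum_mul_left]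
  calc ∑ t ∈ ((Finset.range N).filter (fun n => Squarefree n ∧ Odd n)).image Nat.primeFactors,
        ∏ p ∈ t, auxw p ≤ Real.exp (∑ p ∈ N.primesBelow, auxw p) := le_trans h2 (h3 ▸ h4)
    _ ≤ Real.exp (3 * ∑' k : ℕ, 1/(k:ℝ)^2) := Real.exp_le_exp.mpr h5

lemma summable_auxF : Summable auxF :=
  summable_of_sum_range_le auxF_nonneg sum_range_auxF_le

lemma auxF_mul {m n : ℕ} (h : Nat.Coprime m n) : auxF (m * n) = auxF m * auxF n := by
  rcases Nat.eq_zero_or_pos m with rfl | hm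
  · simp [auxF, auxg, (Nat.coprime_zero_left _).mp h]
  rcases Nat.eq_zero_or_pos n with rfl | hn
  · simp [auxF, auxg, (Nat.coprime_zero_right _).mp h]
  have key : auxg (m * n) = auxg m * auxg n := by
    unfold auxg
    by_cases hsm : Squarefree m ∧ Odd m
    · by_cases hsn : Squarefree n ∧ Odd n
      · rw [if_pos ⟨(Nat.squarefree_mul h).mpr ⟨hsm.1, hsn.1⟩, hsm.2.mul hsn.2⟩,
          if_pos hsm, if_pos hsn,
          Nat.Coprime.primeFactors_mul h,
          Finset.prod_union (Nat.Coprime.disjoint_primeFactors h)]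
      · rw [if_pos hsm, if_neg hsn, if_neg, mul_zero]
        rintro ⟨hsq, hodd⟩
        exact hsn ⟨((Nat.squarefree_mul h).mp hsq).2, (Nat.odd_mul.mp hodd).2⟩
    · rw [if_neg hsm, if_neg, zero_mul]
      rintro ⟨hsq, hodd⟩
      exact hsm ⟨((Nat.squarefree_mul h).mp hsq).1, (Nat.odd_mul.mp hodd).1⟩
  unfold auxF
  rw [key]
  push_cast
  field_simp

lemma auxF_pow_eq_zero {p e : ℕ} (hp : p.Prime) (he : 2 ≤ e) : auxF (p ^ e) = 0 := by
  have : ¬ Squarefree (p ^ e) := by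
    intro hsq
    exact hp.not_isUnit (hsq p (by simpa [sq] using pow_dvd_pow p he : p * p ∣ p ^ e))
  simp [auxF, auxg, this]

lemma tsum_auxF_pow {p : ℕ} (hp : p.Prime) : ∑' e : ℕ, auxF (p ^ e) = 1 + auxF p := by
  rw [tsum_eq_sum (s := {0, 1}) (fun e he => ?_)]
  · simp [auxF_one]
  · refine auxF_pow_eq_zero hp ?_
    simp only [Finset.mem_insert, Finset.mem_singleton] at he
    omega

lemma auxF_prime_odd {p : ℕ} (hp : p.Prime) (h2 : 2 < p) :
    auxF p = 1 / ((p:ℝ) - 2) / p := by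
  have hodd : Odd p := hp.eq_two_or_odd'.resolve_left (by omega)
  simp [auxF, auxg, hp.squarefree, hodd, hp.primeFactors]

lemma twinPrimeConst_mul_tsum : twinPrimeConst * (∑' n, auxF n) = 1 := by
  classical
  set S := ∑' n, auxF n with hS
  have hS1 : (1:ℝ) ≤ S := by
    have := Summable.sum_le_tsum (f := auxF) {1} (fun i _ => auxF_nonneg i) summable_auxF
    simpa [auxF_one] using this
  have hS0 : S ≠ 0 := by linarith
  have hsum : Summable (fun n => ‖auxF n‖) := by
    simpa [Real.norm_eq_abs, abs_of_nonneg (auxF_nonneg _)] using summable_auxF.abs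
  have heuler : HasProd (fun p : Nat.Primes => ∑' e : ℕ, auxF (p ^ e)) S :=
    EulerProduct.eulerProduct_hasProd auxF_one (fun {m n} h => auxF_mul h) hsum auxF_zero
  set H : ℕ → ℝ := fun p => if p.Prime then 1 + auxF p else 1 with hHdef
  have hHeq : (fun p : Nat.Primes => ∑' e : ℕ, auxF (p ^ e)) = (H ∘ (Subtype.val)) := by
    funext p
    simp only [Function.comp_apply, hHdef, if_pos p.prop]
    simpa [Function.comp_def, p.prop] using tsum_auxF_pow p.prop
  rw [hHeq] at heuler
  have hsupp2 : Function.mulSupport H ⊆ {p | p.Prime} := by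
    intro p hp
    simp only [Function.mulSupport, Set.mem_setOf_eq, hHdef] at hp ⊢
    by_contra h
    exact hp (if_neg h)
  have hH : HasProd H S :=
    (hasProd_subtype_iff_of_mulSupport_subset hsupp2).mp heuler
  have hsupp1 : Function.mulSupport H ⊆ {p | p.Prime ∧ 2 < p} := by
    intro p hp
    simp only [Function.mulSupport, Set.mem_setOf_eq, hHdef] at hp ⊢
    by_cases hpp : p.Prime
    · refine ⟨hpp, ?_⟩
      by_contra h2
      have hp2 : p = 2 := by have := hpp.two_le; omega
      subst hp2
      apply hp
      rw [if_pos hpp]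
      have : auxF 2 = 0 := by simp [auxF, auxg]
      rw [this, add_zero]
    · exact absurd (if_neg hpp) hp
  have hT : HasProd (fun p : {p : ℕ // p.Prime ∧ 2 < p} => 1 + auxF p) S := by
    have h := (hasProd_subtype_iff_of_mulSupport_subset hsupp1).mpr hH
    have hcongr : (H ∘ (Subtype.val : {p : ℕ // p.Prime ∧ 2 < p} → ℕ))
        = fun p : {p : ℕ // p.Prime ∧ 2 < p} => 1 + auxF ↑p := by
      funext p
      simp only [Function.comp_apply, hHdef, if_pos p.prop.1]
    rw [← hcongr]
    exact h
  -- inverse product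
  have hTinv : HasProd (fun p : {p : ℕ // p.Prime ∧ 2 < p} => (1 + auxF p)⁻¹) S⁻¹ := by
    rw [HasProd] at hT ⊢
    have := hT.inv₀ hS0
    simpa [Finset.prod_inv_distrib] using this
  -- identify factors
  have hfac : (fun p : {p : ℕ // p.Prime ∧ 2 < p} => (1 - 1 / ((p : ℕ) - 1 : ℝ) ^ 2))
      = fun p : {p : ℕ // p.Prime ∧ 2 < p} => (1 + auxF p)⁻¹ := by
    funext p
    obtain ⟨p, hp, h2⟩ := p
    simp only
    rw [auxF_prime_odd hp h2]
    have h3 : (3:ℝ) ≤ (p:ℝ) := by exact_mod_cast h2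
    have hne1 : (p:ℝ) - 1 ≠ 0 := by linarith
    have hne2 : (p:ℝ) - 2 ≠ 0 := by linarith
    have hne0 : (p:ℝ) ≠ 0 := by linarith
    have key : (1 - 1/((p:ℝ)-1)^2) * (1 + 1/((p:ℝ)-2)/p) = 1 := by
      field_simp
      ring
    exact eq_inv_of_mul_eq_one_left key
  have htp : twinPrimeConst = S⁻¹ := by
    rw [twinPrimeConst, hfac]
    exact hTinv.tprod_eq
  rw [htp, inv_mul_cancel₀ hS0]

lemma swap_lemma (m : ℕ) :
    ∑ r ∈ Finset.Icc 1 m, ∑ d ∈ (2*r-1).divisors, auxg d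
      = ∑ d ∈ Finset.Icc 1 (2*m),
          auxg d * (((Finset.Icc 1 m).filter (fun r => d ∣ 2*r-1)).card : ℝ) := by
  have h1 : ∀ r ∈ Finset.Icc 1 m, ∑ d ∈ (2*r-1).divisors, auxg d
      = ∑ d ∈ Finset.Icc 1 (2*m), if d ∣ 2*r-1 then auxg d else 0 := by
    intro r hr
    obtain ⟨hr1, hrm⟩ := Finset.mem_Icc.mp hr
    have hn0 : 2*r-1 ≠ 0 := by omega
    have hdiv : (2*r-1).divisors = (Finset.Icc 1 (2*m)).filter (· ∣ (2*r-1)) := by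
      ext d
      simp only [Nat.mem_divisors, Finset.mem_filter, Finset.mem_Icc]
      constructor
      · rintro ⟨hd, -⟩
        have hd1 : 1 ≤ d := Nat.pos_of_dvd_of_pos hd (by omega)
        have hdle := Nat.le_of_dvd (by omega) hd
        exact ⟨⟨hd1, by omega⟩, hd⟩
      · rintro ⟨-, hd⟩; exact ⟨hd, hn0⟩
    rw [hdiv, Finset.sum_filter]
  rw [Finset.sum_congr rfl h1, Finset.sum_comm]
  refine Finset.sum_congr rfl fun d _ => ?_
  rw [← Finset.sum_filter, Finset.sum_const, nsmul_eq_mul, mul_comm]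

lemma key_estimate {m : ℕ} (hm : 1 ≤ m) :
    |(∑ r ∈ Finset.Icc 1 m,
        ∏ p ∈ ((2*r-1).primeFactors.filter (fun p => 2 < p)), (((p:ℝ)-1)/((p:ℝ)-2)))
      - m * ∑ d ∈ Finset.Icc 1 (2*m), auxF d| ≤ ∑ d ∈ Finset.Icc 1 (2*m), auxg d := by
  have h1 : ∀ r ∈ Finset.Icc 1 m,
      ∏ p ∈ ((2*r-1).primeFactors.filter (fun p => 2 < p)), (((p:ℝ)-1)/((p:ℝ)-2))
        = ∑ d ∈ (2*r-1).divisors, auxg d := by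
    intro r hr
    obtain ⟨hr1, -⟩ := Finset.mem_Icc.mp hr
    exact prod_eq_sum_divisors (by omega) ⟨r - 1, by omega⟩
  rw [Finset.sum_congr rfl h1, swap_lemma, Finset.mul_sum, ← Finset.sum_sub_distrib]
  calc |∑ d ∈ Finset.Icc 1 (2*m),
          (auxg d * (((Finset.Icc 1 m).filter (fun r => d ∣ 2*r-1)).card : ℝ) - m * auxF d)|
      ≤ ∑ d ∈ Finset.Icc 1 (2*m),
          |auxg d * (((Finset.Icc 1 m).filter (fun r => d ∣ 2*r-1)).card : ℝ) - m * auxF d| :=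
        Finset.abs_sum_le_sum_abs _ _
    _ ≤ ∑ d ∈ Finset.Icc 1 (2*m), auxg d := by
        refine Finset.sum_le_sum fun d hd => ?_
        obtain ⟨hd1, -⟩ := Finset.mem_Icc.mp hd
        by_cases hodd : Odd d
        · have hd0 : (d:ℝ) ≠ 0 := by positivity
          have : (m:ℝ) * auxF d = auxg d * ((m:ℝ)/d) := by
            unfold auxF; field_simp
          rw [this, ← mul_sub, abs_mul, abs_of_nonneg (auxg_nonneg d)]
          calc auxg d * |(((Finset.Icc 1 m).filter (fun r => d ∣ 2*r-1)).card : ℝ) - (m:ℝ)/d|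
              ≤ auxg d * 1 := by
                exact mul_le_mul_of_nonneg_left (count_bound hodd) (auxg_nonneg d)
            _ = auxg d := mul_one _
        · have : auxg d = 0 := by simp [auxg, hodd]
          simp [this, auxF]

lemma tendsto_partial_sums :
    Tendsto (fun m : ℕ => ∑ d ∈ Finset.Icc 1 (2*m), auxF d) atTop (𝓝 (∑' n, auxF n)) := by
  have hEq : ∀ N : ℕ, ∑ d ∈ Finset.Icc 1 N, auxF d = ∑ d ∈ Finset.range (N+1), auxF d := by
    intro N
    rw [Finset.range_eq_Ico, Finset.sum_eq_sum_Ico_succ_bot (by omega), auxF_zero, zero_add,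
      Finset.Ico_add_one_right_eq_Icc]
  have h1 := summable_auxF.hasSum.tendsto_sum_nat
  have h2 : Tendsto (fun m : ℕ => 2*m+1) atTop atTop :=
    Filter.tendsto_atTop_atTop.mpr fun b => ⟨b, fun a ha => by omega⟩
  have := h1.comp h2
  simpa [Function.comp_def, hEq] using this

lemma tendsto_auxg_avg :
    Tendsto (fun m : ℕ => (∑ d ∈ Finset.Icc 1 (2*m), auxg d) / m) atTop (𝓝 0) := by
  rw [Metric.tendsto_atTop]
  intro ε hε
  have h1 := summable_auxF.hasSum.tendsto_sum_nat
  rw [Metric.tendsto_atTop] at h1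
  obtain ⟨D, hD⟩ := h1 (ε/4) (by linarith)
  have htail : ∀ m : ℕ, ∑ d ∈ Finset.Ioc D (2*m), auxF d ≤ ε/4 := by
    intro m
    have hdisj : Disjoint (Finset.range (D+1)) (Finset.Ioc D (2*m)) := by
      rw [Finset.disjoint_left]
      intro a ha hb
      have := Finset.mem_range.mp ha
      have := (Finset.mem_Ioc.mp hb).1
      omega
    have hsum_union : ∑ d ∈ Finset.range (D+1), auxF d + ∑ d ∈ Finset.Ioc D (2*m), auxF d
        = ∑ d ∈ Finset.range (D+1) ∪ Finset.Ioc D (2*m), auxF d :=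
      (Finset.sum_union hdisj).symm
    have hunion_le : ∑ d ∈ Finset.range (D+1) ∪ Finset.Ioc D (2*m), auxF d ≤ ∑' n, auxF n :=
      Summable.sum_le_tsum _ (fun i _ => auxF_nonneg i) summable_auxF
    have hpart := hD (D+1) (by omega)
    rw [Real.dist_eq] at hpart
    have := abs_lt.mp hpart
    linarith [this.1, this.2]
  set C := ∑ d ∈ Finset.Icc 1 D, auxg d with hC
  have hC0 : 0 ≤ C := Finset.sum_nonneg fun d _ => auxg_nonneg d
  obtain ⟨M, hM⟩ := exists_nat_gt (max (2*C/ε) D)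
  refine ⟨max M 1, fun m hm => ?_⟩
  have hm1 : 1 ≤ m := le_trans (le_max_right M 1) hm
  have hmM : M ≤ m := le_trans (le_max_left M 1) hm
  have hmD : D ≤ m := by
    have h1' : (D:ℝ) ≤ max (2*C/ε) D := le_max_right _ _
    have h2' : (D:ℝ) < M := lt_of_le_of_lt h1' hM
    have h3' : D < M := by exact_mod_cast h2'
    omega
  have hmpos : (0:ℝ) < m := by exact_mod_cast hm1
  have hsplit : ∑ d ∈ Finset.Icc 1 (2*m), auxg d
      = C + ∑ d ∈ Finset.Ioc D (2*m), auxg d := by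
    rw [hC]
    rw [show Finset.Icc 1 (2*m) = Finset.Ioc 0 (2*m) from rfl,
      show Finset.Icc 1 D = Finset.Ioc 0 D from rfl,
      ← Finset.sum_Ioc_consecutive _ (Nat.zero_le D) (by omega : D ≤ 2*m)]
  have hbound2 : ∑ d ∈ Finset.Ioc D (2*m), auxg d ≤ 2*m * (ε/4) := by
    have step1 : ∀ d ∈ Finset.Ioc D (2*m), auxg d ≤ 2*m * auxF d := by
      intro d hd
      obtain ⟨hdD, hdle⟩ := Finset.mem_Ioc.mp hd
      have hd1 : 1 ≤ d := by omega
      have hd0 : (d:ℝ) ≠ 0 := by positivity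
      have heq : auxg d = d * auxF d := by unfold auxF; field_simp
      rw [heq]
      have hdle' : (d:ℝ) ≤ 2*m := by exact_mod_cast hdle
      exact mul_le_mul_of_nonneg_right (by push_cast; linarith) (auxF_nonneg d)
    calc ∑ d ∈ Finset.Ioc D (2*m), auxg d ≤ ∑ d ∈ Finset.Ioc D (2*m), 2*m * auxF d :=
          Finset.sum_le_sum step1
      _ = 2*m * ∑ d ∈ Finset.Ioc D (2*m), auxF d := by rw [Finset.mul_sum]
      _ ≤ 2*m * (ε/4) := mul_le_mul_of_nonneg_left (htail m) (by positivity)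
  have hCm : C / m < ε/2 := by
    have h1' : 2*C/ε ≤ max (2*C/ε) D := le_max_left _ _
    have h2' : 2*C/ε < M := lt_of_le_of_lt h1' hM
    have h3' : (M:ℝ) ≤ m := by exact_mod_cast hmM
    have h4' : 2*C/ε < m := lt_of_lt_of_le h2' h3'
    rw [div_lt_iff₀ hmpos]
    have : C = (2*C/ε) * (ε/2) := by field_simp
    rw [this]
    calc (2*C/ε) * (ε/2) < m * (ε/2) := mul_lt_mul_of_pos_right h4' (by linarith)
      _ = ε/2 * m := by ring
  rw [Real.dist_eq, sub_zero]
  have hnonneg : 0 ≤ (∑ d ∈ Finset.Icc 1 (2*m), auxg d) / m :=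
    div_nonneg (Finset.sum_nonneg fun d _ => auxg_nonneg d) (le_of_lt hmpos)
  rw [abs_of_nonneg hnonneg, hsplit]
  calc (C + ∑ d ∈ Finset.Ioc D (2*m), auxg d) / m ≤ (C + 2*m*(ε/4))/m :=
        (div_le_div_iff_of_pos_right hmpos).mpr (by linarith)
    _ = C/m + ε/2 := by field_simp; ring
    _ < ε := by linarith

noncomputable def auxA (m : ℕ) : ℝ :=
  ∑ r ∈ Finset.Icc 1 m,
    ∏ p ∈ ((2*r-1).primeFactors.filter (fun p => 2 < p)), (((p:ℝ)-1)/((p:ℝ)-2))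

/-- The subsequence `{C_{4r-2}} = {C_{2(2r-1)}}` of the Hardy–Littlewood constants has
mean value one: `(1/m) ∑_{r=1}^m C_{4r-2} → 1` as `m → ∞`. -/
theorem HLconst_odd_subsequence_mean_value_one :
    Tendsto (fun m : ℕ => (∑ r ∈ Finset.Icc 1 m, HLconst (2 * r - 1)) / (m : ℝ)) atTop
      (𝓝 1) := by
  have hdiff : Tendsto
      (fun m : ℕ => auxA m / m - ∑ d ∈ Finset.Icc 1 (2*m), auxF d) atTop (𝓝 0) := by
    apply squeeze_zero_norm' ?_ tendsto_auxg_avg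
    filter_upwards [eventually_ge_atTop 1] with m hm
    have hkey := key_estimate hm
    have hmpos : (0:ℝ) < m := by exact_mod_cast hm
    rw [Real.norm_eq_abs]
    have heq : auxA m / m - ∑ d ∈ Finset.Icc 1 (2*m), auxF d
        = (auxA m - m * ∑ d ∈ Finset.Icc 1 (2*m), auxF d) / m := by
      field_simp
    rw [heq, abs_div, abs_of_pos hmpos]
    exact div_le_div_of_nonneg_right hkey hmpos.le
  have hA : Tendsto (fun m : ℕ => auxA m / m) atTop (𝓝 (∑' n, auxF n)) := by
    have := hdiff.add tendsto_partial_sums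
    simpa using this
  have hfinal := hA.const_mul twinPrimeConst
  rw [twinPrimeConst_mul_tsum] at hfinal
  convert hfinal using 2 with m
  unfold HLconst auxA
  rw [← Finset.mul_sum, mul_div_assoc]
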